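/- If A is a locally-complex algebra of dimension n and S is a generating set containing k elements that are linearly independent modulo ℝ, then l(S) ≤ F_{n−k+1}, where F is the Fibonacci sequence with F_1 = F_2 = 1. -/

import Mathlib

/-- Words in a finite subset `S` of a (not necessarily associative) unital algebra:
`IsWord S n a` means `a` is a product (with some bracketing) of `n` elements of `S`,
where `1` is the unique word of length `0`. -/
inductive IsWord {A : Type*} [NonAssocRing A] (S : Set A) : ℕ → A → Prop
  | one : IsWord S 0 1
  | base : ∀ a, a ∈ S → IsWord S 1 a
  | mul : ∀ {m n : ℕ} {a b : A}, 0 < m → 0 < n → IsWord S m a → IsWord S n b →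
      IsWord S (m + n) (a * b)

/-- `Lspan F S k` is the `F`-linear span of all words in `S` of length at most `k`. -/
def Lspan (F : Type*) {A : Type*} [Field F] [NonAssocRing A] [Module F A]
    (S : Set A) (k : ℕ) : Submodule F A :=
  Submodule.span F {a | ∃ m ≤ k, IsWord S m a}

/-- `S` generates the algebra `A` iff the union of all the `Lspan F S k` is all of `A`. -/
def Generates (F : Type*) {A : Type*} [Field F] [NonAssocRing A] [Module F A]
    (S : Set A) : Prop :=
  (⨆ k, Lspan F S k) = ⊤

/-- The length of a generating set: the least `k` with `Lspan F S k = ⊤`. -/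
noncomputable def len (F : Type*) {A : Type*} [Field F] [NonAssocRing A] [Module F A]
    (S : Set A) : ℕ :=
  sInf {k | Lspan F S k = ⊤}

/-- The length of the algebra: the maximum of `len F S` over all finite generating sets. -/
noncomputable def algLen (F : Type*) (A : Type*) [Field F] [NonAssocRing A] [Module F A] : ℕ :=
  sSup {l | ∃ S : Set A, S.Finite ∧ Generates F S ∧ len F S = l}

/-- `w` is a fresh word of length `n` in `S`: a word of length `n` lying in no `Lspan F S m`
for `m < n`. -/
def Fresh (F : Type*) {A : Type*} [Field F] [NonAssocRing A] [Module F A]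
    (S : Set A) (n : ℕ) (w : A) : Prop :=
  IsWord S n w ∧ ∀ m < n, w ∉ Lspan F S m

/-- `(m 0, m 1, …, m N)` is the characteristic sequence of `S`: a non-decreasing sequence
with `m 0 = 0` in which each `k ≥ 1` occurs exactly
`dim Lspan F S k − dim Lspan F S (k-1)` times. -/
def IsCharSeq (F : Type*) {A : Type*} [Field F] [NonAssocRing A] [Module F A]
    (S : Set A) (N : ℕ) (m : ℕ → ℕ) : Prop :=
  m 0 = 0 ∧ (∀ i j, i ≤ j → j ≤ N → m i ≤ m j) ∧
  (∀ t, 1 ≤ t → t ≤ N → 1 ≤ m t) ∧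
  ∀ k, 1 ≤ k →
    ((Finset.range (N + 1)).filter (fun t => m t = k)).card
      = Module.finrank F (Lspan F S k) - Module.finrank F (Lspan F S (k - 1))

/-- A locally-complex algebra: a finite-dimensional unital real (not necessarily associative)
algebra that is quadratic (every `a` satisfies `a² = u•1 + v•a`) and has no nontrivial
idempotents and no nonzero square-zero elements. -/
def LocallyComplex (A : Type*) [NonAssocRing A] [Module ℝ A] [SMulCommClass ℝ A A]
    [IsScalarTower ℝ A A] : Prop :=
  FiniteDimensional ℝ A ∧
  (∀ a : A, ∃ u v : ℝ, a * a = u • (1 : A) + v • a) ∧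
  (∀ a : A, a * a = a → a = 0 ∨ a = 1) ∧
  (∀ a : A, a * a = 0 → a = 0)

set_option linter.unusedSectionVars false

section Aux

variable {A : Type*} [NonAssocRing A] [Module ℝ A] [SMulCommClass ℝ A A]
  [IsScalarTower ℝ A A] {S : Set A}

lemma isWord_zero' : ∀ {m : ℕ} {a : A}, IsWord S m a → m = 0 → a = 1 := by
  intro m a h
  induction h with
  | one => intro; rfl
  | base a ha => omega
  | mul hm hn hu hv => omega

lemma isWord_decomp {m : ℕ} {w : A} (h : IsWord S m w) (hm : 2 ≤ m) :
    ∃ (p q : ℕ) (u v : A), 0 < p ∧ 0 < q ∧ p + q = m ∧ IsWord S p u ∧ IsWord S q v ∧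
      w = u * v := by
  cases h with
  | one => omega
  | base a ha => omega
  | mul hp hq hu hv => exact ⟨_, _, _, _, hp, hq, rfl, hu, hv, rfl⟩

lemma mem_Lspan {m j : ℕ} {a : A} (h : IsWord S m a) (hmj : m ≤ j) : a ∈ Lspan ℝ S j :=
  Submodule.subset_span ⟨m, hmj, h⟩

lemma Lspan_mono {j j' : ℕ} (h : j ≤ j') : Lspan ℝ S j ≤ Lspan ℝ S j' :=
  Submodule.span_mono fun _ ⟨m, hm, hw⟩ => ⟨m, hm.trans h, hw⟩

lemma one_mem_Lspan (j : ℕ) : (1 : A) ∈ Lspan ℝ S j := mem_Lspan IsWord.one j.zero_le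

lemma Lspan_le {K : Submodule ℝ A} {m : ℕ}
    (h : ∀ j ≤ m, ∀ w : A, IsWord S j w → w ∈ K) : Lspan ℝ S m ≤ K :=
  Submodule.span_le.mpr fun _ ⟨j, hj, hw⟩ => h j hj _ hw

lemma word_mul_mem_Lspan {p b : ℕ} {u : A} (hu : IsWord S p u) {y : A}
    (hy : y ∈ Lspan ℝ S b) : u * y ∈ Lspan ℝ S (p + b) := by
  induction hy using Submodule.span_induction with
  | mem v hv =>
    obtain ⟨q, hqb, hv⟩ := hv
    rcases Nat.eq_zero_or_pos p with hp | hp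
    · rw [isWord_zero' hu hp, one_mul]
      exact mem_Lspan hv (by omega)
    rcases Nat.eq_zero_or_pos q with hq | hq
    · rw [isWord_zero' hv hq, mul_one]
      exact mem_Lspan hu (by omega)
    · exact mem_Lspan (IsWord.mul hp hq hu hv) (by omega)
  | zero => rw [mul_zero]; exact zero_mem _
  | add x y _ _ hx hy => rw [mul_add]; exact add_mem hx hy
  | smul c x _ hx => rw [mul_smul_comm]; exact Submodule.smul_mem _ _ hx

lemma mul_mem_Lspan {a b : ℕ} {x y : A} (hx : x ∈ Lspan ℝ S a) (hy : y ∈ Lspan ℝ S b) :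
    x * y ∈ Lspan ℝ S (a + b) := by
  induction hx using Submodule.span_induction with
  | mem u hu =>
    obtain ⟨p, hpa, hu⟩ := hu
    exact Lspan_mono (by omega) (word_mul_mem_Lspan hu hy)
  | zero => rw [zero_mul]; exact zero_mem _
  | add x x' _ _ h1 h2 => rw [add_mul]; exact add_mem h1 h2
  | smul c x _ h1 => rw [smul_mul_assoc]; exact Submodule.smul_mem _ _ h1

lemma exists_Lspan_top [FiniteDimensional ℝ A] (hgen : Generates ℝ S) :
    ∃ N, Lspan ℝ S N = ⊤ := by
  obtain ⟨t, ht⟩ := Module.finite_def.mp ‹FiniteDimensional ℝ A›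
  have hmem : ∀ x : A, ∃ N, x ∈ Lspan ℝ S N := by
    intro x
    have hx : x ∈ ⨆ k, Lspan ℝ S k := by rw [hgen]; trivial
    have hmono : Monotone (fun j => Lspan ℝ S j) := fun i j h => Lspan_mono h
    exact (Submodule.mem_iSup_of_directed _ hmono.directed_le).mp hx
  choose N hN using hmem
  refine ⟨t.sup N, ?_⟩
  rw [eq_top_iff, ← ht, Submodule.span_le]
  intro x hx
  exact Lspan_mono (Finset.le_sup hx) (hN x)

lemma jump_decomp [FiniteDimensional ℝ A]
    (hq : ∀ a : A, ∃ u v : ℝ, a * a = u • (1 : A) + v • a)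
    {m : ℕ} (hm : 2 ≤ m) (hj : Lspan ℝ S (m - 1) < Lspan ℝ S m) :
    ∃ p q : ℕ, p + q = m ∧ 1 ≤ p ∧ p ≤ q ∧
      Lspan ℝ S (p - 1) < Lspan ℝ S p ∧ Lspan ℝ S (q - 1) < Lspan ℝ S q ∧
      (p = q → Module.finrank ℝ (Lspan ℝ S (p - 1)) + 2
          ≤ Module.finrank ℝ (Lspan ℝ S p)) := by
  by_contra hno
  push_neg at hno
  apply hj.not_ge
  apply Lspan_le
  intro j hjm w hw
  by_cases hj' : j ≤ m - 1
  · exact mem_Lspan hw hj'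
  have hjm' : j = m := by omega
  obtain ⟨p, q, u, v, hp, hq0, hpq, hu, hv, rfl⟩ := isWord_decomp hw (by omega)
  by_cases hul : u ∈ Lspan ℝ S (p - 1)
  · exact Lspan_mono (by omega) (mul_mem_Lspan hul (mem_Lspan hv le_rfl))
  by_cases hvl : v ∈ Lspan ℝ S (q - 1)
  · exact Lspan_mono (by omega) (mul_mem_Lspan (mem_Lspan hu le_rfl) hvl)
  have hjp : Lspan ℝ S (p - 1) < Lspan ℝ S p :=
    lt_of_le_of_ne (Lspan_mono (by omega))
      (by intro h; apply hul; rw [h]; exact mem_Lspan hu le_rfl)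
  have hjq : Lspan ℝ S (q - 1) < Lspan ℝ S q :=
    lt_of_le_of_ne (Lspan_mono (by omega))
      (by intro h; apply hvl; rw [h]; exact mem_Lspan hv le_rfl)
  -- from hno conclude p = q and small dimension jump
  have hkey : p = q ∧ Module.finrank ℝ (Lspan ℝ S p)
      < Module.finrank ℝ (Lspan ℝ S (p - 1)) + 2 := by
    rcases le_total p q with hle | hle
    · exact hno p q (by omega) (by omega) hle hjp hjq
    · obtain ⟨h1, h2⟩ := hno q p (by omega) (by omega) hle hjq hjp
      exact ⟨h1.symm, h1 ▸ h2⟩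
  obtain ⟨rfl, hD⟩ := hkey
  -- now q = p, m = p + p; show Lspan p = Lspan (p-1) ⊔ span {u}
  set P := Lspan ℝ S (p - 1) ⊔ Submodule.span ℝ {u} with hP
  have hPle : P ≤ Lspan ℝ S p :=
    sup_le (Lspan_mono (by omega))
      ((Submodule.span_le).mpr (Set.singleton_subset_iff.mpr (mem_Lspan hu le_rfl)))
  have hlt : Lspan ℝ S (p - 1) < P :=
    lt_of_le_of_ne le_sup_left
      (by intro h; apply hul; rw [h]
          exact Submodule.mem_sup_right (Submodule.mem_span_singleton_self u))
  have hPeq : P = Lspan ℝ S p := by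
    have h1 : Module.finrank ℝ (Lspan ℝ S p) ≤ Module.finrank ℝ P := by
      have := Submodule.finrank_lt_finrank_of_lt hlt
      omega
    exact Submodule.eq_of_le_of_finrank_le hPle h1
  have hv' : v ∈ P := by rw [hPeq]; exact mem_Lspan hv le_rfl
  obtain ⟨x, hx, z, hz, hxz⟩ := Submodule.mem_sup.mp hv'
  obtain ⟨c, rfl⟩ := Submodule.mem_span_singleton.mp hz
  have hw' : u * v = u * x + c • (u * u) := by rw [← hxz, mul_add, mul_smul_comm]
  rw [hw']
  obtain ⟨α, β, hαβ⟩ := hq u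
  have h1 : u * x ∈ Lspan ℝ S (m - 1) :=
    Lspan_mono (by omega) (mul_mem_Lspan (mem_Lspan hu le_rfl) hx)
  have h2 : u * u ∈ Lspan ℝ S (m - 1) := by
    rw [hαβ]
    exact add_mem (Submodule.smul_mem _ _ (one_mem_Lspan _))
      (Submodule.smul_mem _ _ (Lspan_mono (by omega) (mem_Lspan hu le_rfl)))
  exact add_mem h1 (Submodule.smul_mem _ _ h2)

lemma jump_fib [FiniteDimensional ℝ A]
    (hq : ∀ a : A, ∃ u v : ℝ, a * a = u • (1 : A) + v • a) (k : ℕ)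
    (hL1 : k + 1 ≤ Module.finrank ℝ (Lspan ℝ S 1)) :
    ∀ m, 2 ≤ m → Lspan ℝ S (m - 1) < Lspan ℝ S m →
      m ≤ Nat.fib (Module.finrank ℝ (Lspan ℝ S (m - 1)) + 2 - k) := by
  intro m
  induction m using Nat.strong_induction_on with
  | _ m IH =>
  intro hm hj
  obtain ⟨p, q, hpq, hp1, hple, hjp, hjq, hmul⟩ := jump_decomp hq hm hj
  have hdm : ∀ i j : ℕ, i ≤ j →
      Module.finrank ℝ (Lspan ℝ S i) ≤ Module.finrank ℝ (Lspan ℝ S j) :=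
    fun i j h => Submodule.finrank_mono (Lspan_mono h)
  have hk1 : ∀ j : ℕ, 1 ≤ j → k + 1 ≤ Module.finrank ℝ (Lspan ℝ S j) :=
    fun j h => hL1.trans (hdm 1 j h)
  have hjpd : Module.finrank ℝ (Lspan ℝ S (p - 1)) < Module.finrank ℝ (Lspan ℝ S p) :=
    Submodule.finrank_lt_finrank_of_lt hjp
  have hjqd : Module.finrank ℝ (Lspan ℝ S (q - 1)) < Module.finrank ℝ (Lspan ℝ S q) :=
    Submodule.finrank_lt_finrank_of_lt hjq
  rcases eq_or_lt_of_le hple with rfl | hplt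
  · -- p = q, multiplicity ≥ 2
    have hD := hmul rfl
    rcases Nat.lt_or_ge p 2 with hp2 | hp2
    · -- p = 1, m = 2
      have hp1' : p = 1 := by omega
      subst hp1'
      have h1 : k + 1 ≤ Module.finrank ℝ (Lspan ℝ S (m - 1)) := by
        have : (1 : ℕ) ≤ m - 1 := by omega
        exact hk1 _ this
      have h3 : (3 : ℕ) ≤ Module.finrank ℝ (Lspan ℝ S (m - 1)) + 2 - k := by omega
      calc m = 2 := by omega
        _ = Nat.fib 3 := by decide
        _ ≤ _ := Nat.fib_mono h3
    · -- p = q ≥ 2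
      have hpIH : p ≤ Nat.fib (Module.finrank ℝ (Lspan ℝ S (p - 1)) + 2 - k) :=
        IH p (by omega) (by omega) hjp
      have hkp : k + 1 ≤ Module.finrank ℝ (Lspan ℝ S (p - 1)) := hk1 _ (by omega)
      have hdp : Module.finrank ℝ (Lspan ℝ S p)
          ≤ Module.finrank ℝ (Lspan ℝ S (m - 1)) := hdm _ _ (by omega)
      set y := Module.finrank ℝ (Lspan ℝ S (p - 1)) + 2 - k with hy
      have hy3 : 3 ≤ y := by omega
      have hyx : y + 2 ≤ Module.finrank ℝ (Lspan ℝ S (m - 1)) + 2 - k := by omega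
      calc m = p + p := by omega
        _ ≤ Nat.fib y + Nat.fib y := by omega
        _ ≤ Nat.fib y + Nat.fib (y + 1) := by
            have := Nat.fib_mono (Nat.le_add_right y 1); omega
        _ = Nat.fib (y + 2) := (Nat.fib_add_two).symm
        _ ≤ _ := Nat.fib_mono hyx
  · -- p < q
    have hq2 : 2 ≤ q := by omega
    have hqIH : q ≤ Nat.fib (Module.finrank ℝ (Lspan ℝ S (q - 1)) + 2 - k) :=
      IH q (by omega) hq2 hjq
    have hkq : k + 1 ≤ Module.finrank ℝ (Lspan ℝ S (q - 1)) := hk1 _ (by omega)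
    have hdq : Module.finrank ℝ (Lspan ℝ S q)
        ≤ Module.finrank ℝ (Lspan ℝ S (m - 1)) := hdm _ _ (by omega)
    set x := Module.finrank ℝ (Lspan ℝ S (m - 1)) + 2 - k with hx
    set yq := Module.finrank ℝ (Lspan ℝ S (q - 1)) + 2 - k with hyq
    have hyq3 : 3 ≤ yq := by omega
    have hyqx : yq + 1 ≤ x := by omega
    obtain ⟨z, hz⟩ : ∃ z, yq = z + 1 := ⟨yq - 1, by omega⟩
    have hfz : Nat.fib (z + 2) = Nat.fib z + Nat.fib (z + 1) := Nat.fib_add_two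
    have hfzyq : Nat.fib (z + 2) ≤ Nat.fib x := Nat.fib_mono (by omega)
    rcases Nat.lt_or_ge p 2 with hp2 | hp2
    · -- p = 1
      have hp1' : p = 1 := by omega
      have hfz1 : 1 ≤ Nat.fib z := Nat.fib_pos.mpr (by omega)
      have : m = 1 + q := by omega
      rw [hz] at hqIH
      omega
    · -- 2 ≤ p < q
      have hpIH : p ≤ Nat.fib (Module.finrank ℝ (Lspan ℝ S (p - 1)) + 2 - k) :=
        IH p (by omega) (by omega) hjp
      have hkp : k + 1 ≤ Module.finrank ℝ (Lspan ℝ S (p - 1)) := hk1 _ (by omega)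
      have hdpq : Module.finrank ℝ (Lspan ℝ S p)
          ≤ Module.finrank ℝ (Lspan ℝ S (q - 1)) := hdm _ _ (by omega)
      set yp := Module.finrank ℝ (Lspan ℝ S (p - 1)) + 2 - k with hyp
      have hypz : yp ≤ z := by omega
      have hfyp : Nat.fib yp ≤ Nat.fib z := Nat.fib_mono hypz
      rw [hz] at hqIH
      omega

end Aux


theorem stmt_18 (A : Type*) [NonAssocRing A] [Module ℝ A]
    [SMulCommClass ℝ A A] [IsScalarTower ℝ A A] (hA : LocallyComplex A)
    (n k : ℕ) (hdim : Module.finrank ℝ A = n)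
    (S : Set A) (hS : S.Finite) (hgen : Generates ℝ S)
    (e : Fin k → A) (he : ∀ i, e i ∈ S)
    (hind : LinearIndependent ℝ (fun i : Fin k => (Submodule.span ℝ {(1 : A)}).mkQ (e i))) :
    len ℝ S ≤ Nat.fib (n - k + 1) := by
  obtain ⟨hfin, hquad, -, -⟩ := hA
  haveI := hfin
  have hne : {j | Lspan ℝ S j = ⊤}.Nonempty := exists_Lspan_top hgen
  have hmem : Lspan ℝ S (sInf {j | Lspan ℝ S j = ⊤}) = ⊤ := Nat.sInf_mem hne
  show sInf {j | Lspan ℝ S j = ⊤} ≤ Nat.fib (n - k + 1)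
  set l := sInf {j | Lspan ℝ S j = ⊤} with hl
  rcases Nat.eq_zero_or_pos l with hl0 | hl1
  · rw [hl0]; exact Nat.zero_le _
  have htop : Lspan ℝ S l = ⊤ := hmem
  have hprev : Lspan ℝ S (l - 1) ≠ ⊤ := by
    intro h
    have : l ≤ l - 1 := Nat.sInf_le h
    omega
  have hjump : Lspan ℝ S (l - 1) < Lspan ℝ S l :=
    lt_of_le_of_ne (Lspan_mono (by omega)) (fun hh => hprev (hh.trans htop))
  have hnt : Nontrivial A := by
    by_contra h
    rw [not_nontrivial_iff_subsingleton] at h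
    exact hprev (Subsingleton.elim _ _)
  -- k + 1 ≤ dim (Lspan 1)
  have hone : (1 : A) ∉ Submodule.span ℝ (Set.range e) := by
    intro h1
    obtain ⟨c, hc⟩ := (Submodule.mem_span_range_iff_exists_fun ℝ).mp h1
    have h2 : ∑ i, c i • (Submodule.span ℝ {(1 : A)}).mkQ (e i) = 0 := by
      have h3 := congrArg (Submodule.span ℝ {(1 : A)}).mkQ hc
      rw [map_sum] at h3
      simp only [map_smul] at h3
      rw [h3, Submodule.mkQ_apply, Submodule.Quotient.mk_eq_zero]
      exact Submodule.mem_span_singleton_self 1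
    have hc0 := Fintype.linearIndependent_iff.mp hind c h2
    simp only [hc0, zero_smul, Finset.sum_const_zero] at hc
    exact one_ne_zero hc.symm
  have hli : LinearIndependent ℝ (Fin.cons (1 : A) e : Fin (k + 1) → A) :=
    linearIndependent_fin_cons.mpr
      ⟨LinearIndependent.of_comp (Submodule.span ℝ {(1 : A)}).mkQ hind, hone⟩
  have hrange : Submodule.span ℝ (Set.range (Fin.cons (1 : A) e : Fin (k + 1) → A))
      ≤ Lspan ℝ S 1 := by
    rw [Submodule.span_le]
    rintro x ⟨i, rfl⟩
    induction i using Fin.cases with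
    | zero => simpa using one_mem_Lspan 1
    | succ j => simpa using mem_Lspan (IsWord.base _ (he j)) le_rfl
  have hL1 : k + 1 ≤ Module.finrank ℝ (Lspan ℝ S 1) := by
    have hcard := finrank_span_eq_card hli
    have hle := Submodule.finrank_mono hrange
    rw [hcard] at hle
    simpa using hle
  rcases Nat.lt_or_ge l 2 with hl2 | hl2
  · -- l = 1
    have : 0 < Nat.fib (n - k + 1) := Nat.fib_pos.mpr (by omega)
    omega
  have hb := jump_fib hquad k hL1 l hl2 hjump
  have hdlt : Module.finrank ℝ (Lspan ℝ S (l - 1)) < n :=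
    hdim ▸ Submodule.finrank_lt hprev
  have hkn : k + 1 ≤ n := hdim ▸ (hL1.trans (Submodule.finrank_le _))
  have harg : Module.finrank ℝ (Lspan ℝ S (l - 1)) + 2 - k ≤ n - k + 1 := by omega
  exact hb.trans (Nat.fib_mono harg)
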